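/- For any deterministic real sequence (h_n)_{n∈ℤ}, and for every m ∈ ℤ, the limit l_m := lim_{n→−∞} f_{h_m} ∘ f_{h_{m-1}} ∘ ⋯ ∘ f_{h_n}(aΓ) exists and is independent of a ∈ {−1, +1}; moreover the resulting sequence satisfies l_m = f_{h_m}(l_{m-1}) for all m ∈ ℤ. -/

import Mathlib

/-- The one-step map `f_h` of the projective chain. -/
noncomputable def fh (Γ h y : ℝ) : ℝ :=
  y + 2 * h + Real.log ((1 + Real.exp (-Γ - (y + 2 * h))) / (1 + Real.exp (-Γ + (y + 2 * h))))

/-- `compUp Γ h n k x = f_{h (n+k)} ∘ ⋯ ∘ f_{h n} (x)` for a field indexed by `ℤ`. -/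
noncomputable def compUp (Γ : ℝ) (h : ℤ → ℝ) (n : ℤ) : ℕ → ℝ → ℝ
  | 0, x => fh Γ (h n) x
  | k + 1, x => fh Γ (h (n + k + 1)) (compUp Γ h n k x)

open Real Filter

noncomputable def q0 (Γ : ℝ) : ℝ := (1 - Real.exp (-Γ)) / (1 + Real.exp (-Γ))

lemma q0_nonneg {Γ : ℝ} (hΓ : 0 < Γ) : 0 ≤ q0 Γ := by
  have h1 : Real.exp (-Γ) ≤ 1 := Real.exp_le_one_iff.mpr (by linarith)
  have h2 : (0:ℝ) < 1 + Real.exp (-Γ) := by positivity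
  unfold q0
  apply div_nonneg <;> linarith

lemma q0_lt_one {Γ : ℝ} (hΓ : 0 < Γ) : q0 Γ < 1 := by
  have h2 : (0:ℝ) < 1 + Real.exp (-Γ) := by positivity
  have h3 : (0:ℝ) < Real.exp (-Γ) := Real.exp_pos _
  unfold q0
  rw [div_lt_one h2]; linarith

lemma fh_hasDerivAt (Γ h y : ℝ) :
    HasDerivAt (fh Γ h)
      (1 - Real.exp (-Γ - (y + 2*h)) / (1 + Real.exp (-Γ - (y + 2*h)))
         - Real.exp (-Γ + (y + 2*h)) / (1 + Real.exp (-Γ + (y + 2*h)))) y := by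
  have hfun : fh Γ h = fun z => z + 2*h + (Real.log (1 + Real.exp (-Γ - (z + 2*h)))
      - Real.log (1 + Real.exp (-Γ + (z + 2*h)))) := by
    funext z
    have h1 : (0:ℝ) < 1 + Real.exp (-Γ - (z + 2*h)) := by positivity
    have h2 : (0:ℝ) < 1 + Real.exp (-Γ + (z + 2*h)) := by positivity
    rw [fh, Real.log_div (ne_of_gt h1) (ne_of_gt h2)]
  rw [hfun]
  have hA : (0:ℝ) < 1 + Real.exp (-Γ - (y + 2*h)) := by positivity
  have hB : (0:ℝ) < 1 + Real.exp (-Γ + (y + 2*h)) := by positivity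
  have h1 : HasDerivAt (fun z : ℝ => z + 2*h) 1 y := (hasDerivAt_id y).add_const _
  have h2 : HasDerivAt (fun z : ℝ => -Γ - (z + 2*h)) (-1) y := h1.const_sub (-Γ)
  have h3 : HasDerivAt (fun z : ℝ => -Γ + (z + 2*h)) 1 y := by
    simpa using h1.const_add (-Γ)
  have h4 := ((h2.exp).const_add 1).log (ne_of_gt hA)
  have h5 := ((h3.exp).const_add 1).log (ne_of_gt hB)
  have := h1.add (h4.sub h5)
  refine this.congr_deriv ?_
  ring

lemma fh_deriv_bound (Γ h y : ℝ) (hΓ : 0 < Γ) :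
    |1 - Real.exp (-Γ - (y + 2*h)) / (1 + Real.exp (-Γ - (y + 2*h)))
       - Real.exp (-Γ + (y + 2*h)) / (1 + Real.exp (-Γ + (y + 2*h)))| ≤ q0 Γ := by
  set u := y + 2*h
  set a := Real.exp (-Γ - u) with ha
  set b := Real.exp (-Γ + u) with hb
  set c := Real.exp (-Γ) with hc
  have hab : a * b = c * c := by
    rw [ha, hb, hc, ← Real.exp_add, ← Real.exp_add]; ring_nf
  have hapos : 0 < a := Real.exp_pos _
  have hbpos : 0 < b := Real.exp_pos _
  have hcpos : 0 < c := Real.exp_pos _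
  have hc1 : c < 1 := by rw [hc]; exact Real.exp_lt_one_iff.mpr (by linarith)
  have hsum : 2 * c ≤ a + b := by nlinarith [sq_nonneg (a - b), sq_nonneg (a + b)]
  have hA : (0:ℝ) < 1 + a := by linarith
  have hB : (0:ℝ) < 1 + b := by linarith
  have hC : (0:ℝ) < 1 + c := by linarith
  have key : 1 - a / (1 + a) - b / (1 + b) = (1 - c * c) / ((1 + a) * (1 + b)) := by
    field_simp
    nlinarith [hab]
  rw [key, abs_of_nonneg (by apply div_nonneg <;> nlinarith)]
  have hden : (1 + c) * (1 + c) ≤ (1 + a) * (1 + b) := by nlinarith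
  calc (1 - c * c) / ((1 + a) * (1 + b)) ≤ (1 - c * c) / ((1 + c) * (1 + c)) := by
        apply div_le_div_of_nonneg_left (by nlinarith) (by positivity) hden
    _ = q0 Γ := by rw [q0, ← hc]; field_simp; ring

lemma fh_lip (Γ h x y : ℝ) (hΓ : 0 < Γ) :
    |fh Γ h x - fh Γ h y| ≤ q0 Γ * |x - y| := by
  have := Convex.norm_image_sub_le_of_norm_deriv_le (f := fh Γ h) (C := q0 Γ) (s := Set.univ)
    (fun z _ => (fh_hasDerivAt Γ h z).differentiableAt)
    (fun z _ => by
      rw [(fh_hasDerivAt Γ h z).deriv]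
      exact (fh_deriv_bound Γ h z hΓ))
    convex_univ (Set.mem_univ y) (Set.mem_univ x)
  simpa [Real.norm_eq_abs] using this

lemma fh_bound (Γ h y : ℝ) (hΓ : 0 < Γ) : |fh Γ h y| ≤ Γ := by
  set u := y + 2*h with hu
  have hA : (0:ℝ) < 1 + Real.exp (-Γ - u) := by positivity
  have hB : (0:ℝ) < 1 + Real.exp (-Γ + u) := by positivity
  have hfh : fh Γ h y = u + Real.log ((1 + Real.exp (-Γ - u)) / (1 + Real.exp (-Γ + u))) := by
    rw [fh]
  rw [hfh, abs_le]
  constructor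
  · have h1 : Real.exp (-Γ - u) * (1 + Real.exp (-Γ + u)) ≤ 1 + Real.exp (-Γ - u) := by
      have : Real.exp (-Γ - u) * Real.exp (-Γ + u) = Real.exp (-(2*Γ)) := by
        rw [← Real.exp_add]; ring_nf
      have h2 : Real.exp (-(2*Γ)) ≤ 1 := Real.exp_le_one_iff.mpr (by linarith)
      nlinarith [Real.exp_pos (-Γ - u)]
    have : Real.exp (-Γ - u) ≤ (1 + Real.exp (-Γ - u)) / (1 + Real.exp (-Γ + u)) := by
      rw [le_div_iff₀ hB]; exact h1
    have := (Real.le_log_iff_exp_le (by positivity)).mpr this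
    linarith
  · have h1 : 1 + Real.exp (-Γ - u) ≤ Real.exp (Γ - u) * (1 + Real.exp (-Γ + u)) := by
      have he : Real.exp (Γ - u) * Real.exp (-Γ + u) = 1 := by
        rw [← Real.exp_add]; ring_nf; exact Real.exp_zero
      have h2 : Real.exp (-Γ - u) ≤ Real.exp (Γ - u) := Real.exp_le_exp.mpr (by linarith)
      nlinarith
    have : (1 + Real.exp (-Γ - u)) / (1 + Real.exp (-Γ + u)) ≤ Real.exp (Γ - u) := by
      rw [div_le_iff₀ hB]; exact h1
    have := (Real.log_le_iff_le_exp (by positivity)).mpr this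
    linarith

lemma compUp_contract (Γ : ℝ) (hΓ : 0 < Γ) (h : ℤ → ℝ) (n : ℤ) (k : ℕ) (x y : ℝ) :
    |compUp Γ h n k x - compUp Γ h n k y| ≤ q0 Γ ^ (k + 1) * |x - y| := by
  induction k with
  | zero => simpa [compUp] using fh_lip Γ (h n) x y hΓ
  | succ k ih =>
    calc |compUp Γ h n (k+1) x - compUp Γ h n (k+1) y|
        ≤ q0 Γ * |compUp Γ h n k x - compUp Γ h n k y| := fh_lip Γ _ _ _ hΓ
      _ ≤ q0 Γ * (q0 Γ ^ (k + 1) * |x - y|) := by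
          exact mul_le_mul_of_nonneg_left ih (q0_nonneg hΓ)
      _ = q0 Γ ^ (k + 1 + 1) * |x - y| := by ring

lemma compUp_bound (Γ : ℝ) (hΓ : 0 < Γ) (h : ℤ → ℝ) (n : ℤ) (k : ℕ) (x : ℝ) :
    |compUp Γ h n k x| ≤ Γ := by
  cases k with
  | zero => exact fh_bound Γ _ _ hΓ
  | succ k => exact fh_bound Γ _ _ hΓ

lemma compUp_shift (Γ : ℝ) (h : ℤ → ℝ) (n : ℤ) (k : ℕ) (x : ℝ) :
    compUp Γ h (n - 1) (k + 1) x = compUp Γ h n k (fh Γ (h (n - 1)) x) := by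
  induction k with
  | zero =>
    show fh Γ (h (n - 1 + (0:ℕ) + 1)) (compUp Γ h (n-1) 0 x) = _
    norm_num [compUp]
  | succ k ih =>
    show fh Γ (h (n - 1 + (k+1:ℕ) + 1)) (compUp Γ h (n-1) (k+1) x) = fh Γ (h (n + (k:ℕ) + 1)) _
    rw [ih]
    congr 2
    push_cast; ring

theorem stmt_7 (Γ : ℝ) (hΓ : 0 < Γ) (h : ℤ → ℝ) :
    ∃ l : ℤ → ℝ,
      (∀ m : ℤ, ∀ a : ℝ, a = 1 ∨ a = -1 →
        Filter.Tendsto (fun k : ℕ => compUp Γ h (m - k) k (a * Γ)) Filter.atTop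
          (nhds (l m))) ∧
      ∀ m : ℤ, l m = fh Γ (h m) (l (m - 1)) := by
  have hq0 := q0_nonneg hΓ
  have hq1 := q0_lt_one hΓ
  -- the sequence for a = 1 is Cauchy
  have hstep : ∀ (m : ℤ) (a : ℝ), |a * Γ| ≤ Γ → ∀ k : ℕ,
      dist (compUp Γ h (m - k) k (a*Γ)) (compUp Γ h (m - (k+1:ℕ)) (k+1) (a*Γ))
        ≤ (2*Γ*(q0 Γ)) * q0 Γ ^ k := by
    intro m a ha k
    have hcast : (m : ℤ) - ((k:ℤ)+1) = (m - k) - 1 := by ring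
    have : compUp Γ h (m - (k+1:ℕ)) (k+1) (a*Γ)
        = compUp Γ h (m - k) k (fh Γ (h (m - k - 1)) (a*Γ)) := by
      rw [show ((m:ℤ) - ((k+1:ℕ):ℤ)) = (m - k) - 1 by push_cast; ring]
      exact compUp_shift Γ h (m - k) k (a*Γ)
    rw [this, Real.dist_eq]
    calc |compUp Γ h (m - k) k (a*Γ) - compUp Γ h (m - k) k (fh Γ (h (m - k - 1)) (a*Γ))|
        ≤ q0 Γ ^ (k+1) * |a*Γ - fh Γ (h (m - k - 1)) (a*Γ)| :=
          compUp_contract Γ hΓ h _ k _ _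
      _ ≤ q0 Γ ^ (k+1) * (2*Γ) := by
          apply mul_le_mul_of_nonneg_left _ (by positivity)
          have h1 := fh_bound Γ (h (m - k - 1)) (a*Γ) hΓ
          have := abs_sub (a*Γ) (fh Γ (h (m - k - 1)) (a*Γ))
          calc |a*Γ - fh Γ (h (m - k - 1)) (a*Γ)| ≤ |a*Γ| + |fh Γ (h (m - k - 1)) (a*Γ)| :=
                abs_sub _ _
            _ ≤ 2*Γ := by linarith
      _ = (2*Γ*(q0 Γ)) * q0 Γ ^ k := by ring
  have habs1 : |(1:ℝ) * Γ| ≤ Γ := by rw [one_mul, abs_of_pos hΓ]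
  have hcauchy : ∀ m : ℤ, CauchySeq (fun k : ℕ => compUp Γ h (m - k) k (1*Γ)) := by
    intro m
    exact cauchySeq_of_le_geometric (q0 Γ) (2*Γ*(q0 Γ)) hq1 (hstep m 1 habs1)
  have hl := fun m : ℤ => (hcauchy m).tendsto_limUnder
  refine ⟨fun m => limUnder atTop (fun k : ℕ => compUp Γ h (m - k) k (1*Γ)), ?_, ?_⟩
  · intro m a ha
    have hdiff : Filter.Tendsto
        (fun k : ℕ => dist (compUp Γ h (m - k) k (1*Γ)) (compUp Γ h (m - k) k (a*Γ)))
        atTop (nhds 0) := by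
      have hb : ∀ k : ℕ, dist (compUp Γ h (m - k) k (1*Γ)) (compUp Γ h (m - k) k (a*Γ))
          ≤ (2*Γ) * q0 Γ ^ (k+1) := by
        intro k
        rw [Real.dist_eq]
        calc |compUp Γ h (m - k) k (1*Γ) - compUp Γ h (m - k) k (a*Γ)|
            ≤ q0 Γ ^ (k+1) * |1*Γ - a*Γ| := compUp_contract Γ hΓ h _ k _ _
          _ ≤ q0 Γ ^ (k+1) * (2*Γ) := by
              apply mul_le_mul_of_nonneg_left _ (by positivity)
              rcases ha with rfl | rfl
              · simp; positivity
              · rw [show (1:ℝ)*Γ - (-1)*Γ = 2*Γ by ring, abs_of_pos (by linarith)]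
          _ = (2*Γ) * q0 Γ ^ (k+1) := by ring
      have hg : Filter.Tendsto (fun k : ℕ => (2*Γ) * q0 Γ ^ (k+1)) atTop (nhds 0) := by
        have := (tendsto_pow_atTop_nhds_zero_of_lt_one hq0 hq1).comp (tendsto_add_atTop_nat 1)
        have := this.const_mul (2*Γ)
        simpa using this
      exact squeeze_zero (fun k => dist_nonneg) hb hg
    exact (hl m).congr_dist hdiff
  · intro m
    have h1 : Filter.Tendsto (fun k : ℕ => compUp Γ h (m - (k+1:ℕ)) (k+1) (1*Γ)) atTop
        (nhds (limUnder atTop (fun k : ℕ => compUp Γ h (m - k) k (1*Γ)))) :=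
      (hl m).comp (tendsto_add_atTop_nat 1)
    have heq : ∀ k : ℕ, compUp Γ h (m - (k+1:ℕ)) (k+1) (1*Γ)
        = fh Γ (h m) (compUp Γ h ((m-1) - k) k (1*Γ)) := by
      intro k
      show fh Γ (h (m - ((k:ℤ)+1) + (k:ℕ) + 1)) (compUp Γ h (m - ((k:ℕ)+1:ℕ)) k (1*Γ)) = _
      push_cast
      rw [show m - ((k:ℤ)+1) + (k:ℤ) + 1 = m by ring, show m - ((k:ℤ)+1) = (m-1) - k by ring]
    have h2 : Filter.Tendsto (fun k : ℕ => fh Γ (h m) (compUp Γ h ((m-1) - k) k (1*Γ))) atTop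
        (nhds (fh Γ (h m) (limUnder atTop (fun k : ℕ => compUp Γ h ((m-1) - k) k (1*Γ))))) := by
      exact ((fh_hasDerivAt Γ (h m) _).continuousAt.tendsto).comp (hl (m-1))
    have h1' := h1.congr (fun k => (heq k))
    exact tendsto_nhds_unique h1' h2
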